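/- Optimal exercise of an American put via the universal process K: fix k ≥ 0. An extended stopping time is a map τ : Ω → {0,...,N} ∪ {∞} with {τ = t} ∈ F_t for all t ∈ {0,...,N}; its payoff is ξ_τ := (1+r)^{-τ}(k - P_τ)·1_{{τ ≤ N}} (equal to 0 on {τ = ∞}), an F_N-measurable square-integrable random variable. Define the extended stopping times τ̲ᵏ := min{ t ∈ {0,...,N} : K_t ≤ k } and τ̄ᵏ := min{ t ∈ {0,...,N} : K_t < k }, each equal to ∞ if no such t exists. If an extended stopping time τᵏ satisfies τ̲ᵏ ≤ τᵏ ≤ τ̄ᵏ a.s. and, a.s. on the event {τᵏ ≤ N}, min_{0≤v≤τᵏ} K_v = K_{τᵏ}, then τᵏ is optimal: for every extended stopping time τ, E_0[ξ_τ] ≤ E_0[ξ_{τᵏ}] a.s. -/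

import Mathlib

open MeasureTheory Filter

/-- Running maximum `max_{t ≤ v ≤ u} L v ω` (intended for `t ≤ u`). -/
noncomputable def runMax {Ω : Type*} (L : ℕ → Ω → ℝ) (t u : ℕ) (ω : Ω) : ℝ :=
  (Finset.Icc t u).fold max (L t ω) fun v => L v ω

/-- Running minimum `min_{t ≤ v ≤ u} K v ω` (intended for `t ≤ u`). -/
noncomputable def runMin {Ω : Type*} (K : ℕ → Ω → ℝ) (t u : ℕ) (ω : Ω) : ℝ :=
  (Finset.Icc t u).fold min (K t ω) fun v => K v ω

section runlemmas
variable {Ω : Type*} (K L : ℕ → Ω → ℝ) (t u s : ℕ) (ω : Ω)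

lemma runMin_self : runMin K t t ω = K t ω := by
  simp [runMin, Finset.Icc_self, Finset.fold_singleton]

lemma runMax_self : runMax L t t ω = L t ω := by
  simp [runMax, Finset.Icc_self, Finset.fold_singleton]

lemma runMin_succ (h : t ≤ u + 1) :
    runMin K t (u+1) ω = min (K (u+1) ω) (runMin K t u ω) := by
  have : u + 1 ∉ Finset.Icc t u := by simp
  rw [runMin, runMin, ← Finset.insert_Icc_right_eq_Icc_add_one h, Finset.fold_insert this]

lemma runMax_succ (h : t ≤ u + 1) :
    runMax L t (u+1) ω = max (L (u+1) ω) (runMax L t u ω) := by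
  have : u + 1 ∉ Finset.Icc t u := by simp
  rw [runMax, runMax, ← Finset.insert_Icc_right_eq_Icc_add_one h, Finset.fold_insert this]

lemma runMax_neg (h : t ≤ u) :
    runMax (fun v ω' => -K v ω') t u ω = - runMin K t u ω := by
  induction u, h using Nat.le_induction with
  | base => rw [runMax_self, runMin_self]
  | succ n hn ih =>
      rw [runMax_succ _ _ _ _ (by omega), runMin_succ _ _ _ _ (by omega), ih, max_neg_neg]

lemma runMin_le {v : ℕ} (h1 : t ≤ v) (h2 : v ≤ u) : runMin K t u ω ≤ K v ω := by
  have h : t ≤ u := le_trans h1 h2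
  induction u, h using Nat.le_induction with
  | base => rw [runMin_self]; have : v = t := le_antisymm h2 h1; rw [this]
  | succ n hn ih =>
      rw [runMin_succ _ _ _ _ (by omega)]
      rcases Nat.lt_or_ge v (n+1) with hv | hv
      · exact le_trans (min_le_right _ _) (ih (by omega))
      · have : v = n + 1 := le_antisymm h2 hv
        rw [this]; exact min_le_left _ _

lemma le_runMin {c : ℝ} (h : t ≤ u) (hc : ∀ v, t ≤ v → v ≤ u → c ≤ K v ω) :
    c ≤ runMin K t u ω := by
  induction u, h using Nat.le_induction with
  | base => rw [runMin_self]; exact hc t le_rfl le_rfl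
  | succ n hn ih =>
      rw [runMin_succ _ _ _ _ (by omega)]
      exact le_min (hc _ (by omega) le_rfl) (ih fun v hv1 hv2 => hc v hv1 (by omega))

lemma runMin_split (h1 : t ≤ s) (h2 : s ≤ u) :
    runMin K t u ω = min (runMin K t s ω) (runMin K s u ω) := by
  induction u, h2 using Nat.le_induction with
  | base =>
      rw [runMin_self, min_eq_left (runMin_le K t s ω h1 le_rfl)]
  | succ n hn ih =>
      rw [runMin_succ _ _ _ _ (by omega), runMin_succ _ _ _ _ (by omega), ih,
        min_left_comm]

end runlemmas

section A
variable {Ω : Type*}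

noncomputable def Gproc (k : ℝ) (K : ℕ → Ω → ℝ) (u : ℕ) (ω : Ω) : ℝ :=
  max (k - runMin K 0 u ω) 0

noncomputable def Vfun (r k : ℝ) (K : ℕ → Ω → ℝ) (N : ℕ) (ω : Ω) : ℝ :=
  (∑ u ∈ Finset.Ico 0 N, r / (1 + r) * ((1 + r) ^ u)⁻¹ * Gproc k K u ω)
    + ((1 + r) ^ N)⁻¹ * Gproc k K N ω

noncomputable def Wfun (r k : ℝ) (K : ℕ → Ω → ℝ) (t N : ℕ) (ω : Ω) : ℝ :=
  (∑ u ∈ Finset.Ico t N, r / (1 + r) * ((1 + r) ^ u)⁻¹ * (k - runMin K t u ω))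
    + ((1 + r) ^ N)⁻¹ * (k - runMin K t N ω)

variable {r k : ℝ} (hr : 0 < r) {K : ℕ → Ω → ℝ} {N : ℕ}

lemma beta_tele (hr : 0 < r) {t N : ℕ} (h : t ≤ N) :
    (∑ u ∈ Finset.Ico t N, r / (1 + r) * ((1 + r) ^ u)⁻¹) + ((1 + r) ^ N)⁻¹
      = ((1 + r) ^ t)⁻¹ := by
  have h1 : (1 : ℝ) + r ≠ 0 := by positivity
  induction N, h using Nat.le_induction with
  | base => simp
  | succ n hn ih =>
      rw [Finset.sum_Ico_succ_top hn]
      have hp : ((1:ℝ) + r) ^ n ≠ 0 := pow_ne_zero _ h1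
      have : r / (1 + r) * ((1 + r) ^ n)⁻¹ + ((1 + r) ^ (n+1))⁻¹ = ((1 + r) ^ n)⁻¹ := by
        rw [pow_succ]
        field_simp
        ring
      linarith [ih]

lemma cpos (hr : 0 < r) (u : ℕ) : 0 ≤ r / (1 + r) * ((1 + r) ^ u)⁻¹ := by positivity

lemma Gproc_nonneg (u : ℕ) (ω : Ω) : 0 ≤ Gproc k K u ω := le_max_right _ _

lemma Vfun_nonneg (hr : 0 < r) (ω : Ω) : 0 ≤ Vfun r k K N ω := by
  have h1 : (0:ℝ) < 1 + r := by positivity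
  refine add_nonneg (Finset.sum_nonneg fun u _ => ?_) ?_
  · exact mul_nonneg (cpos hr u) (Gproc_nonneg u ω)
  · exact mul_nonneg (by positivity) (Gproc_nonneg _ ω)

lemma Wfun_le_Vfun (hr : 0 < r) {t : ℕ} (ht : t ≤ N) (ω : Ω) : Wfun r k K t N ω ≤ Vfun r k K N ω := by
  have key : ∀ u, t ≤ u → k - runMin K t u ω ≤ Gproc k K u ω := by
    intro u hu
    refine le_trans ?_ (le_max_left _ _)
    have : runMin K 0 u ω ≤ runMin K t u ω := by
      rw [runMin_split K 0 u t ω (Nat.zero_le _) hu]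
      exact min_le_right _ _
    linarith
  rw [Vfun, Wfun, ← Finset.sum_Ico_consecutive _ (Nat.zero_le t) ht]
  have h2 : ∀ u ∈ Finset.Ico t N, r / (1 + r) * ((1 + r) ^ u)⁻¹ * (k - runMin K t u ω)
      ≤ r / (1 + r) * ((1 + r) ^ u)⁻¹ * Gproc k K u ω := by
    intro u hu
    exact mul_le_mul_of_nonneg_left (key u (Finset.mem_Ico.mp hu).1) (cpos hr u)
  have h3 : (0:ℝ) ≤ ∑ u ∈ Finset.Ico 0 t, r / (1 + r) * ((1 + r) ^ u)⁻¹ * Gproc k K u ω :=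
    Finset.sum_nonneg fun u _ => mul_nonneg (cpos hr u) (Gproc_nonneg u ω)
  have h4 : ((1 + r) ^ N)⁻¹ * (k - runMin K t N ω) ≤ ((1 + r) ^ N)⁻¹ * Gproc k K N ω :=
    mul_le_mul_of_nonneg_left (key N ht) (by positivity)
  have h5 := Finset.sum_le_sum h2
  linarith

end A

section B
variable {Ω : Type*} {m : MeasurableSpace Ω} {K : ℕ → Ω → ℝ} {N : ℕ} {r k : ℝ}

lemma runMin_sm (hK : ∀ v, v ≤ N → StronglyMeasurable[m] (K v)) {t u : ℕ}
    (h : t ≤ u) (hu : u ≤ N) : StronglyMeasurable[m] (fun ω => runMin K t u ω) := by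
  induction u, h using Nat.le_induction with
  | base => simp only [runMin_self]; exact hK t hu
  | succ n hn ih =>
      have : (fun ω => runMin K t (n+1) ω)
          = fun ω => min (K (n+1) ω) (runMin K t n ω) := by
        funext ω; exact runMin_succ K t n ω (by omega)
      rw [this]
      exact (hK (n+1) hu).inf (ih (by omega))

lemma Gproc_sm (hK : ∀ v, v ≤ N → StronglyMeasurable[m] (K v)) {u : ℕ} (hu : u ≤ N) :
    StronglyMeasurable[m] (Gproc k K u) :=
  (stronglyMeasurable_const.sub (runMin_sm hK (Nat.zero_le u) hu)).sup
    stronglyMeasurable_const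

lemma Vfun_sm (hK : ∀ v, v ≤ N → StronglyMeasurable[m] (K v)) :
    StronglyMeasurable[m] (Vfun r k K N) := by
  refine StronglyMeasurable.add ?_ ((Gproc_sm hK le_rfl).const_mul _)
  refine Finset.stronglyMeasurable_fun_sum _ fun u hu => ?_
  exact (Gproc_sm hK (by simp at hu; omega)).const_mul _

lemma Wfun_sm (hK : ∀ v, v ≤ N → StronglyMeasurable[m] (K v)) {t : ℕ} (ht : t ≤ N) :
    StronglyMeasurable[m] (Wfun r k K t N) := by
  refine StronglyMeasurable.add ?_
    ((stronglyMeasurable_const.sub (runMin_sm hK ht le_rfl)).const_mul _)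
  refine Finset.stronglyMeasurable_fun_sum _ fun u hu => ?_
  simp only [Finset.mem_Ico] at hu
  exact ((stronglyMeasurable_const.sub (runMin_sm hK hu.1 (by omega))).const_mul _)

end B

section C
variable {Ω : Type*} {m0 : MeasurableSpace Ω} {μ : Measure Ω} [IsProbabilityMeasure μ]
  {K : ℕ → Ω → ℝ} {N : ℕ} {r k : ℝ}

lemma runMin_mem (hK : ∀ v, v ≤ N → MemLp (K v) 2 μ) {t u : ℕ}
    (h : t ≤ u) (hu : u ≤ N) : MemLp (fun ω => runMin K t u ω) 2 μ := by
  induction u, h using Nat.le_induction with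
  | base => simp only [runMin_self]; exact hK t hu
  | succ n hn ih =>
      have : (fun ω => runMin K t (n+1) ω)
          = fun ω => min (K (n+1) ω) (runMin K t n ω) := by
        funext ω; exact runMin_succ K t n ω (by omega)
      rw [this]
      exact (hK (n+1) hu).inf (ih (by omega))

lemma Gproc_mem (hK : ∀ v, v ≤ N → MemLp (K v) 2 μ) {u : ℕ} (hu : u ≤ N) :
    MemLp (Gproc k K u) 2 μ :=
  ((memLp_const k).sub (runMin_mem hK (Nat.zero_le u) hu)).sup (memLp_const 0)

lemma Vfun_mem (hK : ∀ v, v ≤ N → MemLp (K v) 2 μ) : MemLp (Vfun r k K N) 2 μ := by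
  have h2 : MemLp (fun ω => ∑ u ∈ Finset.Ico 0 N,
      r / (1 + r) * ((1 + r) ^ u)⁻¹ * Gproc k K u ω) 2 μ :=
    memLp_finset_sum _ fun u hu => (Gproc_mem hK (by simp at hu; omega)).const_mul _
  have h3 : MemLp (fun ω => ((1 + r) ^ N)⁻¹ * Gproc k K N ω) 2 μ :=
    (Gproc_mem hK le_rfl).const_mul _
  exact h2.add h3

lemma memℒp_ksub (hK : ∀ v, v ≤ N → MemLp (K v) 2 μ) {t u : ℕ} (h : t ≤ u) (hu : u ≤ N) :
    MemLp (fun ω => k - runMin K t u ω) 2 μ := by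
  have := (memLp_const (μ := μ) k).sub (runMin_mem hK h hu)
  simpa [Pi.sub_def] using this

lemma Wfun_mem (hK : ∀ v, v ≤ N → MemLp (K v) 2 μ) {t : ℕ} (ht : t ≤ N) :
    MemLp (Wfun r k K t N) 2 μ := by
  have h2 : MemLp (fun ω => ∑ u ∈ Finset.Ico t N,
      r / (1 + r) * ((1 + r) ^ u)⁻¹ * (k - runMin K t u ω)) 2 μ := by
    refine memLp_finset_sum _ fun u hu => ?_
    simp only [Finset.mem_Ico] at hu
    exact (memℒp_ksub hK hu.1 (by omega)).const_mul _
  have h3 : MemLp (fun ω => ((1 + r) ^ N)⁻¹ * (k - runMin K t N ω)) 2 μ :=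
    (memℒp_ksub hK ht le_rfl).const_mul _
  exact h2.add h3

end C
/-- A discrete-time nonlinear expectation on the horizon `{0, ..., N}`:
a family of maps `E t` sending square-integrable `F N`-measurable random
variables to square-integrable `F t`-measurable random variables, satisfying
monotonicity, strict monotonicity, translation invariance, the tower property,
the zero-one law and monotone convergence. -/
structure NLExp {Ω : Type*} {m0 : MeasurableSpace Ω} (μ : Measure Ω)
    (F : Filtration ℕ m0) (N : ℕ) where
  E : ℕ → (Ω → ℝ) → Ω → ℝ
  adapted : ∀ t, t ≤ N → ∀ ξ : Ω → ℝ, StronglyMeasurable[F N] ξ → MemLp ξ 2 μ →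
    StronglyMeasurable[F t] (E t ξ)
  sqInt : ∀ t, t ≤ N → ∀ ξ : Ω → ℝ, StronglyMeasurable[F N] ξ → MemLp ξ 2 μ →
    MemLp (E t ξ) 2 μ
  mono : ∀ t, t ≤ N → ∀ ξ η : Ω → ℝ, StronglyMeasurable[F N] ξ → MemLp ξ 2 μ →
    StronglyMeasurable[F N] η → MemLp η 2 μ → ξ ≤ᵐ[μ] η → E t ξ ≤ᵐ[μ] E t η
  strictMono : ∀ t, t ≤ N → ∀ ξ η : Ω → ℝ, StronglyMeasurable[F N] ξ → MemLp ξ 2 μ →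
    StronglyMeasurable[F N] η → MemLp η 2 μ → ξ ≤ᵐ[μ] η →
    0 < μ {ω | ξ ω < η ω} → 0 < μ {ω | E t ξ ω < E t η ω}
  translation : ∀ t, t ≤ N → ∀ ξ ζ : Ω → ℝ, StronglyMeasurable[F N] ξ → MemLp ξ 2 μ →
    StronglyMeasurable[F t] ζ → MemLp ζ 2 μ → E t (ξ + ζ) =ᵐ[μ] E t ξ + ζ
  tower : ∀ s t, s ≤ t → t ≤ N → ∀ ξ : Ω → ℝ, StronglyMeasurable[F N] ξ → MemLp ξ 2 μ →
    E s (E t ξ) =ᵐ[μ] E s ξ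
  zeroOne : ∀ t, t ≤ N → ∀ ξ η : Ω → ℝ, StronglyMeasurable[F N] ξ → MemLp ξ 2 μ →
    StronglyMeasurable[F N] η → MemLp η 2 μ → ∀ A : Set Ω, MeasurableSet[F t] A →
    E t (A.indicator ξ + Aᶜ.indicator η) =ᵐ[μ]
      A.indicator (E t ξ) + Aᶜ.indicator (E t η)
  monoConv : ∀ t, t ≤ N → ∀ (ξs : ℕ → Ω → ℝ) (ξ : Ω → ℝ),
    (∀ n, StronglyMeasurable[F N] (ξs n)) → (∀ n, MemLp (ξs n) 2 μ) →
    StronglyMeasurable[F N] ξ → MemLp ξ 2 μ →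
    (∀ᵐ ω ∂μ, (Monotone fun n => ξs n ω) ∨ (Antitone fun n => ξs n ω)) →
    (∀ᵐ ω ∂μ, Tendsto (fun n => ξs n ω) atTop (nhds (ξ ω))) →
    ∀ᵐ ω ∂μ, Tendsto (fun n => E t (ξs n) ω) atTop (nhds (E t ξ ω))

section D
variable {Ω : Type*} {m0 : MeasurableSpace Ω} {μ : Measure Ω} [IsProbabilityMeasure μ]
  {F : Filtration ℕ m0} {N : ℕ} (EE : NLExp μ F N)

lemma NLExp.smN {t : ℕ} (ht : t ≤ N) {ξ : Ω → ℝ} (h1 : StronglyMeasurable[F N] ξ)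
    (h2 : MemLp ξ 2 μ) : StronglyMeasurable[F N] (EE.E t ξ) :=
  (EE.adapted t ht ξ h1 h2).mono (F.mono ht)

lemma NLExp.zero {t : ℕ} (ht : t ≤ N) : EE.E t 0 =ᵐ[μ] 0 := by
  have hz1 : StronglyMeasurable[F N] (0 : Ω → ℝ) := stronglyMeasurable_zero
  have hz2 : MemLp (0 : Ω → ℝ) 2 μ := MemLp.zero
  have hsm : StronglyMeasurable[F t] (EE.E t 0) := EE.adapted t ht 0 hz1 hz2
  have hmem := EE.sqInt t ht 0 hz1 hz2
  have h1 := EE.translation t ht 0 (EE.E t 0) hz1 hz2 hsm hmem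
  rw [zero_add] at h1
  have h2 := EE.tower t t le_rfl ht 0 hz1 hz2
  filter_upwards [h1, h2] with ω e1 e2
  simp only [Pi.add_apply] at e1
  rw [e1] at e2
  simp only [Pi.zero_apply]
  linarith

lemma NLExp.fix {t : ℕ} (ht : t ≤ N) {ζ : Ω → ℝ} (h1 : StronglyMeasurable[F t] ζ)
    (h2 : MemLp ζ 2 μ) : EE.E t ζ =ᵐ[μ] ζ := by
  have hz1 : StronglyMeasurable[F N] (0 : Ω → ℝ) := stronglyMeasurable_zero
  have hz2 : MemLp (0 : Ω → ℝ) 2 μ := MemLp.zero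
  have h3 := EE.translation t ht 0 ζ hz1 hz2 h1 h2
  rw [zero_add] at h3
  have h4 := EE.zero ht
  filter_upwards [h3, h4] with ω e3 e4
  simp only [Pi.add_apply] at e3
  simp only [Pi.zero_apply] at e4
  rw [e3, e4, zero_add]

lemma NLExp.congr {t : ℕ} (ht : t ≤ N) {ξ η : Ω → ℝ}
    (hξ1 : StronglyMeasurable[F N] ξ) (hξ2 : MemLp ξ 2 μ)
    (hη1 : StronglyMeasurable[F N] η) (hη2 : MemLp η 2 μ)
    (h : ξ =ᵐ[μ] η) : EE.E t ξ =ᵐ[μ] EE.E t η :=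
  (EE.mono t ht ξ η hξ1 hξ2 hη1 hη2 h.le).antisymm
    (EE.mono t ht η ξ hη1 hη2 hξ1 hξ2 h.symm.le)

lemma NLExp.locEq {t : ℕ} (ht : t ≤ N) {ξ η : Ω → ℝ}
    (hξ1 : StronglyMeasurable[F N] ξ) (hξ2 : MemLp ξ 2 μ)
    (hη1 : StronglyMeasurable[F N] η) (hη2 : MemLp η 2 μ)
    {A : Set Ω} (hA : MeasurableSet[F t] A)
    (h : ∀ᵐ ω ∂μ, ω ∈ A → ξ ω = η ω) :
    ∀ᵐ ω ∂μ, ω ∈ A → EE.E t ξ ω = EE.E t η ω := by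
  have hAN : MeasurableSet[F N] A := F.mono ht A hA
  have hA0 : MeasurableSet A := F.le t A hA
  have e1 := EE.zeroOne t ht ξ η hξ1 hξ2 hη1 hη2 A hA
  have e2 := EE.zeroOne t ht η η hη1 hη2 hη1 hη2 A hA
  have e3 : (A.indicator ξ + Aᶜ.indicator η) =ᵐ[μ] (A.indicator η + Aᶜ.indicator η) := by
    filter_upwards [h] with ω hω
    by_cases hmem : ω ∈ A
    · simp [Set.indicator_of_mem hmem, Set.indicator_of_notMem (fun hc : ω ∈ Aᶜ => hc hmem),
        hω hmem]
    · simp [Set.indicator_of_notMem hmem, Set.indicator_of_mem (Set.mem_compl hmem)]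
  have nξ : MemLp (A.indicator ξ + Aᶜ.indicator η) 2 μ :=
    (hξ2.indicator hA0).add (hη2.indicator hA0.compl)
  have nη : MemLp (A.indicator η + Aᶜ.indicator η) 2 μ :=
    (hη2.indicator hA0).add (hη2.indicator hA0.compl)
  have sξ : StronglyMeasurable[F N] (A.indicator ξ + Aᶜ.indicator η) :=
    (hξ1.indicator hAN).add (hη1.indicator hAN.compl)
  have sη : StronglyMeasurable[F N] (A.indicator η + Aᶜ.indicator η) :=
    (hη1.indicator hAN).add (hη1.indicator hAN.compl)
  have e4 := EE.congr ht sξ nξ sη nη e3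
  filter_upwards [e1, e2, e4] with ω w1 w2 w4
  intro hmem
  have := w1.symm.trans (w4.trans w2)
  simp only [Pi.add_apply, Set.indicator_of_mem hmem,
    Set.indicator_of_notMem (fun hc : ω ∈ Aᶜ => hc hmem)] at this
  linarith

end D
/-- The payoff of an American put with strike `k` exercised at the extended stopping
time `τ` (valued in `{0,...,N} ∪ {∞}`): `(1+r)^{-τ} (k - P_τ) · 1_{{τ ≤ N}}`. -/
noncomputable def putPayoff {Ω : Type*} (r k : ℝ) (S : ℕ → Ω → ℝ) (N : ℕ)
    (τ : Ω → ℕ∞) (ω : Ω) : ℝ :=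
  if τ ω ≤ (N : ℕ∞) then ((1 + r) ^ (τ ω).toNat)⁻¹ * (k - S (τ ω).toNat ω) else 0

section E
variable {Ω : Type*} {r k : ℝ} {S K : ℕ → Ω → ℝ} {N : ℕ}

lemma enat_lt_succ_iff {a : ℕ∞} {t : ℕ} (h : a ≠ (t : ℕ∞)) :
    a < ((t + 1 : ℕ) : ℕ∞) ↔ a < (t : ℕ∞) := by
  cases a using ENat.recTopCoe with
  | top => simp
  | coe m =>
      rw [Nat.cast_lt, Nat.cast_lt]
      have : m ≠ t := by exact_mod_cast h
      omega

lemma putPayoff_eq_sum (τ : Ω → ℕ∞) (hrange : ∀ ω, τ ω ≤ (N : ℕ∞) ∨ τ ω = ⊤) :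
    putPayoff r k S N τ = fun ω => ∑ t ∈ Finset.range (N+1),
      Set.indicator {ω' | τ ω' = (t : ℕ∞)}
        (fun ω'' => ((1+r)^t)⁻¹ * (k - S t ω'')) ω := by
  funext ω
  rcases hrange ω with h | h
  · have hne : τ ω ≠ ⊤ := fun hh => by
      rw [hh] at h; exact (ENat.coe_ne_top N) (top_le_iff.mp h)
    set n := (τ ω).toNat with hn
    have hτω : τ ω = (n : ℕ∞) := (ENat.coe_toNat hne).symm
    have hnN : n ≤ N := by rw [hτω] at h; exact_mod_cast h
    rw [putPayoff, if_pos h,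
      Finset.sum_eq_single_of_mem n (by simp; omega)
        (fun b _ hbn => Set.indicator_of_notMem
          (by simp only [Set.mem_setOf_eq, hτω, Nat.cast_inj]; omega) _),
      Set.indicator_of_mem (by exact hτω)]
  · rw [putPayoff, if_neg (by rw [h]; exact fun hc => (ENat.coe_ne_top N) (top_le_iff.mp hc))]
    refine (Finset.sum_eq_zero fun t _ => Set.indicator_of_notMem ?_ _).symm
    simp only [Set.mem_setOf_eq, h]
    exact fun hc => (ENat.coe_ne_top t) hc.symm

noncomputable def Rproc (r k : ℝ) (S K : ℕ → Ω → ℝ) (N : ℕ) (τ : Ω → ℕ∞)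
    (t : ℕ) (ω : Ω) : ℝ :=
  if τ ω < (t : ℕ∞) then putPayoff r k S N τ ω else Vfun r k K N ω

lemma Rproc_zero (τ : Ω → ℕ∞) : Rproc r k S K N τ 0 = Vfun r k K N := by
  funext ω
  rw [Rproc, if_neg (by simp)]

lemma Rproc_succ (τ : Ω → ℕ∞) {t : ℕ} (ht : t ≤ N) :
    Rproc r k S K N τ (t+1)
      = {ω | τ ω = (t : ℕ∞)}.indicator (fun ω => ((1+r)^t)⁻¹ * (k - S t ω))
        + {ω | τ ω = (t : ℕ∞)}ᶜ.indicator (Rproc r k S K N τ t) := by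
  funext ω
  by_cases h : τ ω = (t : ℕ∞)
  · have hlt : τ ω < ((t + 1 : ℕ) : ℕ∞) := by
      rw [h]; exact_mod_cast Nat.lt_succ_self t
    have hle : τ ω ≤ (N : ℕ∞) := by rw [h]; exact_mod_cast ht
    simp only [Pi.add_apply, Set.indicator_of_mem (show ω ∈ {ω' | τ ω' = (t:ℕ∞)} from h),
      Set.indicator_of_notMem (show ω ∉ {ω' | τ ω' = (t:ℕ∞)}ᶜ from fun hc => hc h)]
    rw [Rproc, if_pos hlt, putPayoff, if_pos hle, h, add_zero]
    simp
  · simp only [Pi.add_apply, Set.indicator_of_notMem (show ω ∉ {ω' | τ ω' = (t:ℕ∞)} from h),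
      Set.indicator_of_mem (show ω ∈ {ω' | τ ω' = (t:ℕ∞)}ᶜ from h), zero_add]
    by_cases h2 : τ ω < (t : ℕ∞)
    · rw [Rproc, Rproc, if_pos ((enat_lt_succ_iff h).mpr h2), if_pos h2]
    · rw [Rproc, Rproc, if_neg (fun hc => h2 ((enat_lt_succ_iff h).mp hc)), if_neg h2]

lemma Rproc_absorb (τ : Ω → ℕ∞) (t : ℕ) :
    {ω | τ ω = (t : ℕ∞)}.indicator (Vfun r k K N)
      + {ω | τ ω = (t : ℕ∞)}ᶜ.indicator (Rproc r k S K N τ t)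
      = Rproc r k S K N τ t := by
  funext ω
  by_cases h : τ ω = (t : ℕ∞)
  · simp only [Pi.add_apply, Set.indicator_of_mem (show ω ∈ {ω' | τ ω' = (t:ℕ∞)} from h),
      Set.indicator_of_notMem (show ω ∉ {ω' | τ ω' = (t:ℕ∞)}ᶜ from fun hc => hc h), add_zero]
    rw [Rproc, if_neg (by rw [h]; exact lt_irrefl _)]
  · simp only [Pi.add_apply, Set.indicator_of_notMem (show ω ∉ {ω' | τ ω' = (t:ℕ∞)} from h),
      Set.indicator_of_mem (show ω ∈ {ω' | τ ω' = (t:ℕ∞)}ᶜ from h), zero_add]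

lemma Rproc_last (τ : Ω → ℕ∞) (ω : Ω) :
    (τ ω ≤ (N : ℕ∞) → Rproc r k S K N τ (N+1) ω = putPayoff r k S N τ ω)
    ∧ (τ ω = ⊤ → Rproc r k S K N τ (N+1) ω = Vfun r k K N ω) := by
  constructor
  · intro h
    rw [Rproc, if_pos]
    calc τ ω ≤ (N : ℕ∞) := h
    _ < ((N+1 : ℕ) : ℕ∞) := by exact_mod_cast Nat.lt_succ_self N
  · intro h
    rw [Rproc, if_neg (by rw [h]; simp)]

lemma putPayoff_top (τ : Ω → ℕ∞) (ω : Ω) (h : τ ω = ⊤) : putPayoff r k S N τ ω = 0 := by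
  rw [putPayoff, if_neg (by rw [h]; exact fun hc => (ENat.coe_ne_top N) (top_le_iff.mp hc))]

lemma Wfun_eq_Vfun_on (hr : 0 < r) {t : ℕ} (ht : t ≤ N) (ω : Ω)
    (h1 : ∃ s, s ≤ t ∧ K s ω ≤ k)
    (h2 : ∀ v, v < t → k ≤ K v ω)
    (h3 : runMin K 0 t ω = K t ω) :
    Wfun r k K t N ω = Vfun r k K N ω := by
  have hKt : K t ω ≤ k := by
    obtain ⟨s, hs1, hs2⟩ := h1
    calc K t ω = runMin K 0 t ω := h3.symm
    _ ≤ K s ω := runMin_le K 0 t ω (Nat.zero_le s) hs1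
    _ ≤ k := hs2
  have hmin0 : ∀ u, t ≤ u → runMin K 0 u ω = runMin K t u ω := by
    intro u hu
    rw [runMin_split K 0 u t ω (Nat.zero_le t) hu, h3]
    exact min_eq_right (runMin_le K t u ω le_rfl hu)
  have hG1 : ∀ u, t ≤ u → Gproc k K u ω = k - runMin K t u ω := by
    intro u hu
    rw [Gproc, hmin0 u hu]
    exact max_eq_left (by have := le_trans (runMin_le K t u ω le_rfl hu) hKt; linarith)
  have hG0 : ∀ u, u < t → Gproc k K u ω = 0 := by
    intro u hu
    apply max_eq_right
    have : k ≤ runMin K 0 u ω :=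
      le_runMin K 0 u ω (Nat.zero_le u) (fun v _ hv2 => h2 v (by omega))
    linarith
  have hsplit := Finset.sum_Ico_consecutive
    (fun u => r/(1+r) * ((1+r)^u)⁻¹ * Gproc k K u ω) (Nat.zero_le t) ht
  have hz : ∑ u ∈ Finset.Ico 0 t, r/(1+r) * ((1+r)^u)⁻¹ * Gproc k K u ω = 0 :=
    Finset.sum_eq_zero fun u hu => by rw [hG0 u (Finset.mem_Ico.mp hu).2, mul_zero]
  have hc : ∑ u ∈ Finset.Ico t N, r/(1+r) * ((1+r)^u)⁻¹ * Gproc k K u ω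
      = ∑ u ∈ Finset.Ico t N, r/(1+r) * ((1+r)^u)⁻¹ * (k - runMin K t u ω) :=
    Finset.sum_congr rfl fun u hu => by rw [hG1 u (Finset.mem_Ico.mp hu).1]
  rw [Vfun, Wfun, ← hsplit, hz, hc, hG1 N ht, zero_add]

lemma Vfun_eq_zero (ω : Ω) (h : ∀ s, s ≤ N → k ≤ K s ω) : Vfun r k K N ω = 0 := by
  have hG : ∀ u, u ≤ N → Gproc k K u ω = 0 := by
    intro u hu
    apply max_eq_right
    have : k ≤ runMin K 0 u ω :=
      le_runMin K 0 u ω (Nat.zero_le u) (fun v _ hv2 => h v (by omega))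
    linarith
  have hz : ∑ u ∈ Finset.Ico 0 N, r/(1+r) * ((1+r)^u)⁻¹ * Gproc k K u ω = 0 :=
    Finset.sum_eq_zero fun u hu => by rw [hG u (Finset.mem_Ico.mp hu).2.le, mul_zero]
  rw [Vfun, hz, hG N le_rfl, mul_zero, add_zero]

end E
section F
variable {Ω : Type*} {m0 : MeasurableSpace Ω} {μ : Measure Ω} [IsProbabilityMeasure μ]
  {F : Filtration ℕ m0} {N : ℕ} (EE : NLExp μ F N) {r k : ℝ} {S K : ℕ → Ω → ℝ}

lemma rep_lemma (hr : 0 < r)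
    (hKsm : ∀ v, v ≤ N → StronglyMeasurable[F N] (K v))
    (hKmem : ∀ v, v ≤ N → MemLp (K v) 2 μ)
    (hK_rep : ∀ t, t ≤ N →
      (fun ω => -(((1 + r) ^ t)⁻¹ * S t ω)) =ᵐ[μ] EE.E t fun ω =>
        (∑ u ∈ Finset.Ico t N,
          r / (1 + r) * ((1 + r) ^ u)⁻¹ * runMax (fun v ω' => -K v ω') t u ω)
        + ((1 + r) ^ N)⁻¹ * runMax (fun v ω' => -K v ω') t N ω)
    {t : ℕ} (ht : t ≤ N) :
    (fun ω => ((1 + r) ^ t)⁻¹ * (k - S t ω)) =ᵐ[μ] EE.E t (Wfun r k K t N) := by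
  have h0 := hK_rep t ht
  have hfun : (fun ω =>
      (∑ u ∈ Finset.Ico t N,
          r / (1 + r) * ((1 + r) ^ u)⁻¹ * runMax (fun v ω' => -K v ω') t u ω)
        + ((1 + r) ^ N)⁻¹ * runMax (fun v ω' => -K v ω') t N ω)
      = fun ω => Wfun r k K t N ω - k * ((1 + r) ^ t)⁻¹ := by
    funext ω
    have hterm : ∀ u ∈ Finset.Ico t N,
        r / (1 + r) * ((1 + r) ^ u)⁻¹ * runMax (fun v ω' => -K v ω') t u ω
          = r / (1 + r) * ((1 + r) ^ u)⁻¹ * (k - runMin K t u ω)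
            - r / (1 + r) * ((1 + r) ^ u)⁻¹ * k := by
      intro u hu
      rw [runMax_neg K t u ω (Finset.mem_Ico.mp hu).1]; ring
    rw [Finset.sum_congr rfl hterm, Finset.sum_sub_distrib, runMax_neg K t N ω ht,
      ← Finset.sum_mul, Wfun]
    have htele := beta_tele (r := r) hr ht
    linear_combination (-k) * htele
  rw [hfun] at h0
  have hWsm := Wfun_sm (k := k) (r := r) hKsm ht
  have hWmem := Wfun_mem (k := k) (r := r) (μ := μ) hKmem ht
  have hξsm : StronglyMeasurable[F N]
      (fun ω => Wfun r k K t N ω - k * ((1 + r) ^ t)⁻¹) := hWsm.sub stronglyMeasurable_const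
  have hξmem : MemLp (fun ω => Wfun r k K t N ω - k * ((1 + r) ^ t)⁻¹) 2 μ :=
    hWmem.sub (memLp_const _)
  have htr := EE.translation t ht _ (fun _ => k * ((1 + r) ^ t)⁻¹) hξsm hξmem
    stronglyMeasurable_const (memLp_const _)
  have hfun2 : ((fun ω => Wfun r k K t N ω - k * ((1 + r) ^ t)⁻¹)
      + (fun _ => k * ((1 + r) ^ t)⁻¹)) = Wfun r k K t N := by
    funext ω; simp
  rw [hfun2] at htr
  filter_upwards [h0, htr] with ω w0 w1
  simp only [Pi.add_apply] at w1
  rw [w1, ← w0]; ring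

lemma main_le (hr : 0 < r)
    (hKsm : ∀ v, v ≤ N → StronglyMeasurable[F N] (K v))
    (hKmem : ∀ v, v ≤ N → MemLp (K v) 2 μ)
    (hrep : ∀ t, t ≤ N →
      (fun ω => ((1 + r) ^ t)⁻¹ * (k - S t ω)) =ᵐ[μ] EE.E t (Wfun r k K t N))
    (hξsm : ∀ t, t ≤ N → StronglyMeasurable[F t] (fun ω => ((1 + r) ^ t)⁻¹ * (k - S t ω)))
    (hξmem : ∀ t, t ≤ N → MemLp (fun ω => ((1 + r) ^ t)⁻¹ * (k - S t ω)) 2 μ)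
    (τ : Ω → ℕ∞)
    (hmeas : ∀ t, t ≤ N → MeasurableSet[F t] {ω | τ ω = (t : ℕ∞)})
    (hrange : ∀ ω, τ ω ≤ (N : ℕ∞) ∨ τ ω = ⊤)
    (hXsm : StronglyMeasurable[F N] (putPayoff r k S N τ))
    (hXmem : MemLp (putPayoff r k S N τ) 2 μ)
    (hloc : ∀ t, t ≤ N → ∀ᵐ ω ∂μ, τ ω = (t : ℕ∞) →
      EE.E t (Wfun r k K t N) ω ≤ EE.E t (Vfun r k K N) ω)
    (htop : ∀ᵐ ω ∂μ, τ ω = ⊤ → putPayoff r k S N τ ω ≤ Vfun r k K N ω) :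
    EE.E 0 (putPayoff r k S N τ) ≤ᵐ[μ] EE.E 0 (Vfun r k K N) := by
  have hVsm : StronglyMeasurable[F N] (Vfun r k K N) := Vfun_sm hKsm
  have hVmem : MemLp (Vfun r k K N) 2 μ := Vfun_mem hKmem
  have nR : ∀ t, t ≤ N + 1 → StronglyMeasurable[F N] (Rproc r k S K N τ t)
      ∧ MemLp (Rproc r k S K N τ t) 2 μ := by
    intro t
    induction t with
    | zero => intro _; rw [Rproc_zero]; exact ⟨hVsm, hVmem⟩
    | succ n ih =>
        intro h
        have hn : n ≤ N := by omega
        obtain ⟨s1, m1⟩ := ih (by omega)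
        have hA : MeasurableSet[F N] {ω | τ ω = (n : ℕ∞)} := F.mono hn _ (hmeas n hn)
        have hA0 : MeasurableSet {ω | τ ω = (n : ℕ∞)} := F.le n _ (hmeas n hn)
        rw [Rproc_succ τ hn]
        exact ⟨(((hξsm n hn).mono (F.mono hn)).indicator hA).add (s1.indicator hA.compl),
          ((hξmem n hn).indicator hA0).add (m1.indicator hA0.compl)⟩
  have step : ∀ t, t ≤ N →
      EE.E t (Rproc r k S K N τ (t+1)) ≤ᵐ[μ] EE.E t (Rproc r k S K N τ t) := by
    intro t ht
    have hA : MeasurableSet[F t] {ω | τ ω = (t : ℕ∞)} := hmeas t ht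
    obtain ⟨sR, mR⟩ := nR t (by omega)
    have hξsmN := (hξsm t ht).mono (F.mono ht)
    have e1 : EE.E t (Rproc r k S K N τ (t+1)) =ᵐ[μ]
        {ω | τ ω = (t : ℕ∞)}.indicator (EE.E t (fun ω => ((1 + r) ^ t)⁻¹ * (k - S t ω)))
          + {ω | τ ω = (t : ℕ∞)}ᶜ.indicator (EE.E t (Rproc r k S K N τ t)) := by
      rw [Rproc_succ τ ht]
      exact EE.zeroOne t ht _ _ hξsmN (hξmem t ht) sR mR _ hA
    have e2 := EE.fix ht (hξsm t ht) (hξmem t ht)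
    have e3 := hrep t ht
    have e4 := hloc t ht
    have e5 : EE.E t (Rproc r k S K N τ t) =ᵐ[μ]
        {ω | τ ω = (t : ℕ∞)}.indicator (EE.E t (Vfun r k K N))
          + {ω | τ ω = (t : ℕ∞)}ᶜ.indicator (EE.E t (Rproc r k S K N τ t)) := by
      have h5 := EE.zeroOne t ht _ _ hVsm hVmem sR mR _ hA
      rw [Rproc_absorb τ t] at h5
      exact h5
    filter_upwards [e1, e2, e3, e4, e5] with ω w1 w2 w3 w4 w5
    rw [w1, w5]
    by_cases hmem : ω ∈ {ω' | τ ω' = (t : ℕ∞)}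
    · simp only [Pi.add_apply, Set.indicator_of_mem hmem,
        Set.indicator_of_notMem (fun hc : ω ∈ {ω' | τ ω' = (t : ℕ∞)}ᶜ => hc hmem), add_zero]
      calc EE.E t (fun ω => ((1 + r) ^ t)⁻¹ * (k - S t ω)) ω
          = ((1 + r) ^ t)⁻¹ * (k - S t ω) := w2
      _ = EE.E t (Wfun r k K t N) ω := w3
      _ ≤ EE.E t (Vfun r k K N) ω := w4 hmem
    · simp only [Pi.add_apply, Set.indicator_of_notMem hmem,
        Set.indicator_of_mem (show ω ∈ {ω' | τ ω' = (t : ℕ∞)}ᶜ from hmem), zero_add, le_refl]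
  have chain : ∀ t, t ≤ N + 1 →
      EE.E 0 (Rproc r k S K N τ t) ≤ᵐ[μ] EE.E 0 (Vfun r k K N) := by
    intro t
    induction t with
    | zero =>
        intro _
        rw [Rproc_zero]
    | succ n ih =>
        intro h
        have hn : n ≤ N := by omega
        obtain ⟨sR1, mR1⟩ := nR (n+1) h
        obtain ⟨sR0, mR0⟩ := nR n (by omega)
        have t1 := EE.tower 0 n (Nat.zero_le n) hn _ sR1 mR1
        have t3 := EE.tower 0 n (Nat.zero_le n) hn _ sR0 mR0
        have t2 := EE.mono 0 (Nat.zero_le N) _ _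
          (EE.smN hn sR1 mR1) (EE.sqInt n hn _ sR1 mR1)
          (EE.smN hn sR0 mR0) (EE.sqInt n hn _ sR0 mR0) (step n hn)
        have hle := ih (by omega)
        filter_upwards [t1, t2, t3, hle] with ω w1 w2 w3 w4
        calc EE.E 0 (Rproc r k S K N τ (n+1)) ω
            = EE.E 0 (EE.E n (Rproc r k S K N τ (n+1))) ω := w1.symm
        _ ≤ EE.E 0 (EE.E n (Rproc r k S K N τ n)) ω := w2
        _ = EE.E 0 (Rproc r k S K N τ n) ω := w3
        _ ≤ EE.E 0 (Vfun r k K N) ω := w4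
  have hXR : putPayoff r k S N τ ≤ᵐ[μ] Rproc r k S K N τ (N+1) := by
    filter_upwards [htop] with ω w
    rcases hrange ω with h | h
    · rw [(Rproc_last τ ω).1 h]
    · rw [(Rproc_last τ ω).2 h]; exact w h
  obtain ⟨sR, mR⟩ := nR (N+1) le_rfl
  exact (EE.mono 0 (Nat.zero_le N) _ _ hXsm hXmem sR mR hXR).trans (chain (N+1) le_rfl)

lemma main_ge (hr : 0 < r)
    (hKsm : ∀ v, v ≤ N → StronglyMeasurable[F N] (K v))
    (hKmem : ∀ v, v ≤ N → MemLp (K v) 2 μ)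
    (hrep : ∀ t, t ≤ N →
      (fun ω => ((1 + r) ^ t)⁻¹ * (k - S t ω)) =ᵐ[μ] EE.E t (Wfun r k K t N))
    (hξsm : ∀ t, t ≤ N → StronglyMeasurable[F t] (fun ω => ((1 + r) ^ t)⁻¹ * (k - S t ω)))
    (hξmem : ∀ t, t ≤ N → MemLp (fun ω => ((1 + r) ^ t)⁻¹ * (k - S t ω)) 2 μ)
    (τ : Ω → ℕ∞)
    (hmeas : ∀ t, t ≤ N → MeasurableSet[F t] {ω | τ ω = (t : ℕ∞)})
    (hrange : ∀ ω, τ ω ≤ (N : ℕ∞) ∨ τ ω = ⊤)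
    (hXsm : StronglyMeasurable[F N] (putPayoff r k S N τ))
    (hXmem : MemLp (putPayoff r k S N τ) 2 μ)
    (hloc : ∀ t, t ≤ N → ∀ᵐ ω ∂μ, τ ω = (t : ℕ∞) →
      EE.E t (Vfun r k K N) ω ≤ EE.E t (Wfun r k K t N) ω)
    (htop : ∀ᵐ ω ∂μ, τ ω = ⊤ → Vfun r k K N ω ≤ putPayoff r k S N τ ω) :
    EE.E 0 (Vfun r k K N) ≤ᵐ[μ] EE.E 0 (putPayoff r k S N τ) := by
  have hVsm : StronglyMeasurable[F N] (Vfun r k K N) := Vfun_sm hKsm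
  have hVmem : MemLp (Vfun r k K N) 2 μ := Vfun_mem hKmem
  have nR : ∀ t, t ≤ N + 1 → StronglyMeasurable[F N] (Rproc r k S K N τ t)
      ∧ MemLp (Rproc r k S K N τ t) 2 μ := by
    intro t
    induction t with
    | zero => intro _; rw [Rproc_zero]; exact ⟨hVsm, hVmem⟩
    | succ n ih =>
        intro h
        have hn : n ≤ N := by omega
        obtain ⟨s1, m1⟩ := ih (by omega)
        have hA : MeasurableSet[F N] {ω | τ ω = (n : ℕ∞)} := F.mono hn _ (hmeas n hn)
        have hA0 : MeasurableSet {ω | τ ω = (n : ℕ∞)} := F.le n _ (hmeas n hn)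
        rw [Rproc_succ τ hn]
        exact ⟨(((hξsm n hn).mono (F.mono hn)).indicator hA).add (s1.indicator hA.compl),
          ((hξmem n hn).indicator hA0).add (m1.indicator hA0.compl)⟩
  have step : ∀ t, t ≤ N →
      EE.E t (Rproc r k S K N τ t) ≤ᵐ[μ] EE.E t (Rproc r k S K N τ (t+1)) := by
    intro t ht
    have hA : MeasurableSet[F t] {ω | τ ω = (t : ℕ∞)} := hmeas t ht
    obtain ⟨sR, mR⟩ := nR t (by omega)
    have hξsmN := (hξsm t ht).mono (F.mono ht)
    have e1 : EE.E t (Rproc r k S K N τ (t+1)) =ᵐ[μ]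
        {ω | τ ω = (t : ℕ∞)}.indicator (EE.E t (fun ω => ((1 + r) ^ t)⁻¹ * (k - S t ω)))
          + {ω | τ ω = (t : ℕ∞)}ᶜ.indicator (EE.E t (Rproc r k S K N τ t)) := by
      rw [Rproc_succ τ ht]
      exact EE.zeroOne t ht _ _ hξsmN (hξmem t ht) sR mR _ hA
    have e2 := EE.fix ht (hξsm t ht) (hξmem t ht)
    have e3 := hrep t ht
    have e4 := hloc t ht
    have e5 : EE.E t (Rproc r k S K N τ t) =ᵐ[μ]
        {ω | τ ω = (t : ℕ∞)}.indicator (EE.E t (Vfun r k K N))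
          + {ω | τ ω = (t : ℕ∞)}ᶜ.indicator (EE.E t (Rproc r k S K N τ t)) := by
      have h5 := EE.zeroOne t ht _ _ hVsm hVmem sR mR _ hA
      rw [Rproc_absorb τ t] at h5
      exact h5
    filter_upwards [e1, e2, e3, e4, e5] with ω w1 w2 w3 w4 w5
    rw [w1, w5]
    by_cases hmem : ω ∈ {ω' | τ ω' = (t : ℕ∞)}
    · simp only [Pi.add_apply, Set.indicator_of_mem hmem,
        Set.indicator_of_notMem (fun hc : ω ∈ {ω' | τ ω' = (t : ℕ∞)}ᶜ => hc hmem), add_zero]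
      calc EE.E t (Vfun r k K N) ω
          ≤ EE.E t (Wfun r k K t N) ω := w4 hmem
      _ = ((1 + r) ^ t)⁻¹ * (k - S t ω) := w3.symm
      _ = EE.E t (fun ω => ((1 + r) ^ t)⁻¹ * (k - S t ω)) ω := w2.symm
    · simp only [Pi.add_apply, Set.indicator_of_notMem hmem,
        Set.indicator_of_mem (show ω ∈ {ω' | τ ω' = (t : ℕ∞)}ᶜ from hmem), zero_add, le_refl]
  have chain : ∀ t, t ≤ N + 1 →
      EE.E 0 (Vfun r k K N) ≤ᵐ[μ] EE.E 0 (Rproc r k S K N τ t) := by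
    intro t
    induction t with
    | zero =>
        intro _
        rw [Rproc_zero]
    | succ n ih =>
        intro h
        have hn : n ≤ N := by omega
        obtain ⟨sR1, mR1⟩ := nR (n+1) h
        obtain ⟨sR0, mR0⟩ := nR n (by omega)
        have t1 := EE.tower 0 n (Nat.zero_le n) hn _ sR1 mR1
        have t3 := EE.tower 0 n (Nat.zero_le n) hn _ sR0 mR0
        have t2 := EE.mono 0 (Nat.zero_le N) _ _
          (EE.smN hn sR0 mR0) (EE.sqInt n hn _ sR0 mR0)
          (EE.smN hn sR1 mR1) (EE.sqInt n hn _ sR1 mR1) (step n hn)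
        have hle := ih (by omega)
        filter_upwards [t1, t2, t3, hle] with ω w1 w2 w3 w4
        calc EE.E 0 (Vfun r k K N) ω
            ≤ EE.E 0 (Rproc r k S K N τ n) ω := w4
        _ = EE.E 0 (EE.E n (Rproc r k S K N τ n)) ω := w3.symm
        _ ≤ EE.E 0 (EE.E n (Rproc r k S K N τ (n+1))) ω := w2
        _ = EE.E 0 (Rproc r k S K N τ (n+1)) ω := w1
  have hXR : Rproc r k S K N τ (N+1) ≤ᵐ[μ] putPayoff r k S N τ := by
    filter_upwards [htop] with ω w
    rcases hrange ω with h | h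
    · rw [(Rproc_last τ ω).1 h]
    · rw [(Rproc_last τ ω).2 h]; exact w h
  obtain ⟨sR, mR⟩ := nR (N+1) le_rfl
  exact (chain (N+1) le_rfl).trans (EE.mono 0 (Nat.zero_le N) _ _ sR mR hXsm hXmem hXR)

end F
section G
variable {Ω : Type*} {r k : ℝ} {S : ℕ → Ω → ℝ} {N : ℕ}

lemma affine_sm {m : MeasurableSpace Ω} {f : Ω → ℝ} (c d : ℝ)
    (hf : StronglyMeasurable[m] f) : StronglyMeasurable[m] (fun ω => c * (d - f ω)) :=
  (stronglyMeasurable_const.sub hf).const_mul c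

lemma putPayoff_sm {m0 : MeasurableSpace Ω} {F : Filtration ℕ m0}
    (hS : ∀ t, t ≤ N → StronglyMeasurable[F t] (S t)) (τ : Ω → ℕ∞)
    (hmeas : ∀ t, t ≤ N → MeasurableSet[F t] {ω | τ ω = (t : ℕ∞)})
    (hrange : ∀ ω, τ ω ≤ (N : ℕ∞) ∨ τ ω = ⊤) :
    StronglyMeasurable[F N] (putPayoff r k S N τ) := by
  rw [putPayoff_eq_sum τ hrange]
  refine Finset.stronglyMeasurable_fun_sum _ fun t ht => ?_
  have ht' : t ≤ N := by simp at ht; omega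
  exact (affine_sm _ _ ((hS t ht').mono (F.mono ht'))).indicator (F.mono ht' _ (hmeas t ht'))

variable {m0 : MeasurableSpace Ω} {μ : Measure Ω} [IsProbabilityMeasure μ]

lemma affine_mem' {g : Ω → ℝ} (c d : ℝ) (hg : MemLp (fun ω => c * g ω) 2 μ) :
    MemLp (fun ω => c * (d - g ω)) 2 μ := by
  have h := (memLp_const (μ := μ) (c * d)).sub hg
  have e : (fun ω => c * (d - g ω)) = ((fun _ => c * d) - fun ω => c * g ω) := by
    funext ω; simp only [Pi.sub_apply]; ring
  rw [e]; exact h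

lemma putPayoff_mem
    (hS_sqInt : ∀ t, t ≤ N → MemLp (fun ω => ((1 + r) ^ t)⁻¹ * S t ω) 2 μ) (τ : Ω → ℕ∞)
    (hmeas0 : ∀ t, t ≤ N → MeasurableSet {ω | τ ω = (t : ℕ∞)})
    (hrange : ∀ ω, τ ω ≤ (N : ℕ∞) ∨ τ ω = ⊤) :
    MemLp (putPayoff r k S N τ) 2 μ := by
  rw [putPayoff_eq_sum τ hrange]
  refine memLp_finset_sum _ fun t ht => ?_
  have ht' : t ≤ N := by simp at ht; omega
  exact (affine_mem' _ _ (hS_sqInt t ht')).indicator (hmeas0 t ht')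

end G

/-- **Optimal exercise of an American put via the universal process `K`.** If an
extended stopping time `τᵏ` satisfies `τ̲ᵏ ≤ τᵏ ≤ τ̄ᵏ` a.s. (where
`τ̲ᵏ = min{ t ≤ N : K_t ≤ k }` and `τ̄ᵏ = min{ t ≤ N : K_t < k }`, `= ∞` if no such
`t`) and, a.s. on `{τᵏ ≤ N}`, `min_{0≤v≤τᵏ} K_v = K_{τᵏ}`, then `τᵏ` is optimal:
for every extended stopping time `τ`, `E 0 [ξ_τ] ≤ E 0 [ξ_{τᵏ}]` a.s. -/
theorem american_put_optimal_exercise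
{Ω : Type*} [TopologicalSpace Ω] [PolishSpace Ω]
    [m0 : MeasurableSpace Ω] [BorelSpace Ω]
    (μ : Measure Ω) [IsProbabilityMeasure μ]
    (F : Filtration ℕ m0) (N : ℕ) (hN : 1 ≤ N)
    (EE : NLExp μ F N)
    (r : ℝ) (hr : 0 < r)
    (S : ℕ → Ω → ℝ)
    (hS_adapted : ∀ t, t ≤ N → StronglyMeasurable[F t] (S t))
    (hS_sqInt : ∀ t, t ≤ N → MemLp (fun ω => ((1 + r) ^ t)⁻¹ * S t ω) 2 μ)
(K : ℕ → Ω → ℝ)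
    (hK_adapted : ∀ t, t ≤ N → StronglyMeasurable[F t] (K t))
    (hK_sqInt : ∀ t, t ≤ N → MemLp (K t) 2 μ)
    (hK_rep : ∀ t, t ≤ N →
      (fun ω => -(((1 + r) ^ t)⁻¹ * S t ω)) =ᵐ[μ] EE.E t fun ω =>
        (∑ u ∈ Finset.Ico t N,
          r / (1 + r) * ((1 + r) ^ u)⁻¹ * runMax (fun v ω' => -K v ω') t u ω)
        + ((1 + r) ^ N)⁻¹ * runMax (fun v ω' => -K v ω') t N ω)
    (k : ℝ) (hk : 0 ≤ k)
    (τlowk τbark : Ω → ℕ∞)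
    (hτlowk_def : ∀ ω, τlowk ω = ⨅ (t : ℕ) (_ : t ≤ N ∧ K t ω ≤ k), (t : ℕ∞))
    (hτbark_def : ∀ ω, τbark ω = ⨅ (t : ℕ) (_ : t ≤ N ∧ K t ω < k), (t : ℕ∞))
    (τk : Ω → ℕ∞)
    (hτk_meas : ∀ t : ℕ, t ≤ N → MeasurableSet[F t] {ω | τk ω = (t : ℕ∞)})
    (hτk_range : ∀ ω, τk ω ≤ (N : ℕ∞) ∨ τk ω = ⊤)
    (hbetween : ∀ᵐ ω ∂μ, τlowk ω ≤ τk ω ∧ τk ω ≤ τbark ω)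
    (hmin : ∀ᵐ ω ∂μ, τk ω ≤ (N : ℕ∞) →
      runMin K 0 (τk ω).toNat ω = K (τk ω).toNat ω) :
    ∀ τ : Ω → ℕ∞,
      (∀ t : ℕ, t ≤ N → MeasurableSet[F t] {ω | τ ω = (t : ℕ∞)}) →
      (∀ ω, τ ω ≤ (N : ℕ∞) ∨ τ ω = ⊤) →
      EE.E 0 (putPayoff r k S N τ) ≤ᵐ[μ] EE.E 0 (putPayoff r k S N τk) := by
  intro τ hτm hτr
  have hKsm : ∀ v, v ≤ N → StronglyMeasurable[F N] (K v) :=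
    fun v hv => (hK_adapted v hv).mono (F.mono hv)
  have hrep : ∀ t, t ≤ N →
      (fun ω => ((1 + r) ^ t)⁻¹ * (k - S t ω)) =ᵐ[μ] EE.E t (Wfun r k K t N) :=
    fun t ht => rep_lemma EE hr hKsm hK_sqInt hK_rep ht
  have hξsm : ∀ t, t ≤ N →
      StronglyMeasurable[F t] (fun ω => ((1 + r) ^ t)⁻¹ * (k - S t ω)) :=
    fun t ht => affine_sm _ _ (hS_adapted t ht)
  have hξmem : ∀ t, t ≤ N → MemLp (fun ω => ((1 + r) ^ t)⁻¹ * (k - S t ω)) 2 μ :=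
    fun t ht => affine_mem' _ _ (hS_sqInt t ht)
  have hVsm : StronglyMeasurable[F N] (Vfun r k K N) := Vfun_sm hKsm
  have hVmem : MemLp (Vfun r k K N) 2 μ := Vfun_mem hK_sqInt
  -- upper bound for τ
  have hloc : ∀ t, t ≤ N → ∀ᵐ ω ∂μ, τ ω = (t : ℕ∞) →
      EE.E t (Wfun r k K t N) ω ≤ EE.E t (Vfun r k K N) ω := by
    intro t ht
    have hg := EE.mono t ht _ _ (Wfun_sm hKsm ht) (Wfun_mem hK_sqInt ht) hVsm hVmem
      (Filter.Eventually.of_forall fun ω => Wfun_le_Vfun hr ht ω)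
    exact hg.mono fun ω hω _ => hω
  have htop : ∀ᵐ ω ∂μ, τ ω = ⊤ → putPayoff r k S N τ ω ≤ Vfun r k K N ω :=
    Filter.Eventually.of_forall fun ω h => by
      rw [putPayoff_top τ ω h]; exact Vfun_nonneg hr ω
  have h1 : EE.E 0 (putPayoff r k S N τ) ≤ᵐ[μ] EE.E 0 (Vfun r k K N) :=
    main_le EE hr hKsm hK_sqInt hrep hξsm hξmem τ hτm hτr
      (putPayoff_sm hS_adapted τ hτm hτr)
      (putPayoff_mem hS_sqInt τ (fun t ht => F.le t _ (hτm t ht)) hτr)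
      hloc htop
  -- local equality for τk
  have hlocK : ∀ t, t ≤ N → ∀ᵐ ω ∂μ, ω ∈ {ω' | τk ω' = (t : ℕ∞)} →
      Wfun r k K t N ω = Vfun r k K N ω := by
    intro t ht
    filter_upwards [hbetween, hmin] with ω hb hm hmem
    have hmem' : τk ω = (t : ℕ∞) := hmem
    refine Wfun_eq_Vfun_on hr ht ω ?_ ?_ ?_
    · by_contra hcon
      push_neg at hcon
      have hlow : ((t + 1 : ℕ) : ℕ∞) ≤ τlowk ω := by
        rw [hτlowk_def ω]
        refine le_iInf fun s => le_iInf fun hs => ?_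
        have hst : t + 1 ≤ s := by
          by_contra hc
          exact absurd hs.2 (not_le.mpr (hcon s (by omega)))
        exact Nat.cast_le.mpr hst
      have := le_trans hlow (hb.1.trans_eq hmem')
      have := Nat.cast_le.mp this
      omega
    · intro v hv
      by_contra hcon
      push_neg at hcon
      have hbar : τbark ω ≤ (v : ℕ∞) := by
        rw [hτbark_def ω]
        exact le_trans (iInf_le _ v) (iInf_le _ ⟨by omega, hcon⟩)
      have h2 := le_trans (hmem' ▸ hb.2) hbar
      have := Nat.cast_le.mp h2
      omega
    · have hle : τk ω ≤ (N : ℕ∞) := by rw [hmem']; exact_mod_cast ht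
      have h3 := hm hle
      rw [hmem', ENat.toNat_coe] at h3
      exact h3
  have hlocKE : ∀ t, t ≤ N → ∀ᵐ ω ∂μ, τk ω = (t : ℕ∞) →
      EE.E t (Vfun r k K N) ω ≤ EE.E t (Wfun r k K t N) ω := by
    intro t ht
    have := EE.locEq ht (Wfun_sm hKsm ht) (Wfun_mem hK_sqInt ht) hVsm hVmem
      (hτk_meas t ht) (hlocK t ht)
    exact this.mono fun ω hω hmem => le_of_eq (hω hmem).symm
  have htopK : ∀ᵐ ω ∂μ, τk ω = ⊤ → Vfun r k K N ω ≤ putPayoff r k S N τk ω := by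
    filter_upwards [hbetween] with ω hb h
    have hbar : τbark ω = ⊤ := top_le_iff.mp (h ▸ hb.2)
    have hKall : ∀ s, s ≤ N → k ≤ K s ω := by
      intro s hs
      by_contra hcon
      push_neg at hcon
      have hb2 : τbark ω ≤ (s : ℕ∞) := by
        rw [hτbark_def ω]
        exact le_trans (iInf_le _ s) (iInf_le _ ⟨hs, hcon⟩)
      rw [hbar] at hb2
      exact (ENat.coe_ne_top s) (top_le_iff.mp hb2)
    rw [putPayoff_top τk ω h, Vfun_eq_zero ω hKall]
  have h2 : EE.E 0 (Vfun r k K N) ≤ᵐ[μ] EE.E 0 (putPayoff r k S N τk) :=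
    main_ge EE hr hKsm hK_sqInt hrep hξsm hξmem τk hτk_meas hτk_range
      (putPayoff_sm hS_adapted τk hτk_meas hτk_range)
      (putPayoff_mem hS_sqInt τk (fun t ht => F.le t _ (hτk_meas t ht)) hτk_range)
      hlocKE htopK
  exact h1.trans h2
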